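/- The subgroup N is abelian, and there is a group isomorphism ψ: N → Z_1(ℤ²) such that ψ(x^m y^n z (x^m y^n)^{-1}) = p((m,n)) for all m, n ∈ ℤ; moreover ψ is equivariant with respect to conjugation: ψ(g u g^{-1}) = π(g)·ψ(u) for every g ∈ Met_k(2) and u ∈ N, where π: Met_k(2) → ℤ² is the projection with π(x) = e_1, π(y) = e_2, π(z) = 0. Thus N is isomorphic to the first homology group H_1(E²) of the lattice as a group with operators from ℤ². -/

import Mathlib

/-- The free generators `x, y, z` of the presentation of `Met_k(2)`. -/
def xg : FreeGroup (Fin 3) := FreeGroup.of 0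
def yg : FreeGroup (Fin 3) := FreeGroup.of 1
def zg : FreeGroup (Fin 3) := FreeGroup.of 2

/-- The word `x^m y^n` in the free group. -/
def wmn (m n : ℤ) : FreeGroup (Fin 3) := xg ^ m * yg ^ n

open scoped commutatorElement

/-- The relators of `Met_k(2)`: `[x,y] z^{-k}` (i.e. `[x,y] = z^k`) and
`[w z w⁻¹, w' z w'⁻¹]` for all `w = x^m y^n`, `w' = x^{m'} y^{n'}` (all such conjugates
of `z` commute). -/
def metRels (k : ℤ) : Set (FreeGroup (Fin 3)) :=
  {r | r = ⁅xg, yg⁆ * zg ^ (-k) ∨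
    ∃ m n m' n' : ℤ,
      r = ⁅wmn m n * zg * (wmn m n)⁻¹, wmn m' n' * zg * (wmn m' n')⁻¹⁆}

/-- The group `Met_k(2)`, presented by generators `x, y, z` and the above relations. -/
abbrev Met2 (k : ℤ) : Type := PresentedGroup (metRels k)

/-- The generator `x` of `Met_k(2)`. -/
def X (k : ℤ) : Met2 k := PresentedGroup.of 0
/-- The generator `y` of `Met_k(2)`. -/
def Y (k : ℤ) : Met2 k := PresentedGroup.of 1
/-- The generator `z` of `Met_k(2)`. -/
def Z (k : ℤ) : Met2 k := PresentedGroup.of 2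

/-- `N`: the smallest normal subgroup of `Met_k(2)` containing `z`. -/
def Nsub (k : ℤ) : Subgroup (Met2 k) := Subgroup.normalClosure {Z k}

instance (k : ℤ) : (Nsub k).Normal := Subgroup.normalClosure_normal

/-- The lattice `ℤ²`. -/
abbrev Z2 : Type := Fin 2 → ℤ

/-- Edge chains of the grid complex `E²` (Cayley graph of `ℤ²`). -/
abbrev C1Z2 : Type := (Z2 × Fin 2) →₀ ℤ

/-- Vertex chains: the free abelian group on `ℤ²`. -/
abbrev C0Z2 : Type := Z2 →₀ ℤ

/-- Translation action of `v ∈ ℤ²` on edge chains: `v • δ_{(m,i)} = δ_{(m+v,i)}`. -/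
noncomputable def shiftZ (v : Z2) : C1Z2 →+ C1Z2 :=
  Finsupp.mapDomain.addMonoidHom fun p => (v + p.1, p.2)

/-- The boundary map `∂ δ_{(m,i)} = δ_{m + e i} - δ_m`; its kernel is
`Z_1(ℤ²) = H_1(E²)`. -/
noncomputable def bdZ : C1Z2 →+ C0Z2 :=
  Finsupp.liftAddHom fun p =>
    zmultiplesHom C0Z2
      (Finsupp.single (p.1 + Pi.single p.2 1) 1 - Finsupp.single p.1 1)

/-- The plaquette `p(m) = δ_{(m,1)} + δ_{(m+e₁,2)} - δ_{(m+e₂,1)} - δ_{(m,2)}`. -/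
noncomputable def plaq2 (m : Z2) : C1Z2 :=
  Finsupp.single (m, 0) 1 + Finsupp.single (m + Pi.single 0 1, 1) 1
    - Finsupp.single (m + Pi.single 1 1, 0) 1 - Finsupp.single (m, 1) 1

namespace MetDN
open Multiplicative

lemma shiftZ_single (v m : Z2) (i : Fin 2) (t : ℤ) :
    shiftZ v (Finsupp.single (m, i) t) = Finsupp.single (v + m, i) t := by
  simp [shiftZ, Finsupp.mapDomain.addMonoidHom_apply, Finsupp.mapDomain_single]

lemma shiftZ_zero : shiftZ (0 : Z2) = AddMonoidHom.id C1Z2 := by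
  refine Finsupp.addHom_ext fun p t => ?_
  obtain ⟨m, i⟩ := p
  simp [shiftZ_single]

lemma shiftZ_add (v w : Z2) : shiftZ (v + w) = (shiftZ v).comp (shiftZ w) := by
  refine Finsupp.addHom_ext fun p t => ?_
  obtain ⟨m, i⟩ := p
  simp [shiftZ_single, add_assoc]

/-- shift as an AddEquiv -/
noncomputable def shiftE (v : Z2) : C1Z2 ≃+ C1Z2 :=
  Finsupp.domCongr ((Equiv.addLeft v).prodCongr (Equiv.refl (Fin 2)))

lemma shiftE_apply (v : Z2) (c : C1Z2) : shiftE v c = shiftZ v c := by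
  simp only [shiftE, shiftZ, Finsupp.domCongr_apply, Finsupp.equivMapDomain_eq_mapDomain,
    Finsupp.mapDomain.addMonoidHom_apply]
  rfl

noncomputable def act : Multiplicative Z2 →* MulAut (Multiplicative C1Z2) where
  toFun v := AddEquiv.toMultiplicative (shiftE v.toAdd)
  map_one' := by
    refine MulEquiv.ext fun c => ?_
    show ofAdd (shiftE (toAdd (1 : Multiplicative Z2)) (toAdd c)) = c
    rw [shiftE_apply]
    show ofAdd (shiftZ (0 : Z2) (toAdd c)) = c
    rw [shiftZ_zero]
    simp
  map_mul' v w := by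
    refine MulEquiv.ext fun c => ?_
    show ofAdd (shiftE (toAdd (v * w)) (toAdd c))
      = ofAdd (shiftE v.toAdd (toAdd (ofAdd (shiftE w.toAdd (toAdd c)))))
    simp only [toAdd_ofAdd, shiftE_apply, toAdd_mul, shiftZ_add, AddMonoidHom.comp_apply]

abbrev GG : Type := Multiplicative C1Z2 ⋊[act] Multiplicative Z2

lemma act_apply (v : Z2) (c : C1Z2) :
    act (ofAdd v) (ofAdd c) = ofAdd (shiftZ v c) := by
  show ofAdd (shiftE v (toAdd (ofAdd c))) = ofAdd (shiftZ v c)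
  simp [shiftE_apply]

end MetDN
namespace MetDN
open Multiplicative SemidirectProduct

noncomputable def gx (k : ℤ) : GG :=
  inl (ofAdd (k • Finsupp.single ((0 : Z2), (0 : Fin 2)) 1)) * inr (ofAdd (Pi.single 0 1))
noncomputable def gy (k : ℤ) : GG :=
  inl (ofAdd (k • Finsupp.single ((0 : Z2), (1 : Fin 2)) 1)) * inr (ofAdd (Pi.single 1 1))
noncomputable def gz : GG := inl (ofAdd (plaq2 0))

lemma right_gx (k : ℤ) : (gx k).right = ofAdd (Pi.single 0 1) := by simp [gx]
lemma right_gy (k : ℤ) : (gy k).right = ofAdd (Pi.single 1 1) := by simp [gy]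
lemma right_gz : gz.right = 1 := by simp [gz]

lemma mul_formula (a b : Multiplicative C1Z2) (u v : Multiplicative Z2) :
    (inl a * inr u : GG) * (inl b * inr v) = inl (a * act u b) * inr (u * v) := by
  calc inl a * inr u * (inl b * inr v)
      = inl a * (inr u * inl b * inr u⁻¹) * (inr u * inr v) := by
        rw [map_inv]; group
    _ = inl a * inl (act u b) * (inr u * inr v) := by rw [← inl_aut]
    _ = _ := by rw [← map_mul, ← map_mul]

lemma inv_formula (a : Multiplicative C1Z2) (u : Multiplicative Z2) :
    (inl a * inr u : GG)⁻¹ = inl ((act u)⁻¹ a⁻¹) * inr u⁻¹ := by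
  rw [inl_aut_inv, mul_inv_rev, ← map_inv, ← map_inv, mul_assoc, ← map_mul,
    mul_inv_cancel, map_one, mul_one]

lemma act_act (u v : Multiplicative Z2) (w : Multiplicative C1Z2) :
    act u (act v w) = act (u * v) w := by rw [map_mul]; rfl

lemma comm_formula (a b : Multiplicative C1Z2) (u v : Multiplicative Z2) :
    ⁅(inl a * inr u : GG), inl b * inr v⁆
      = (inl (a * act u b * (act v a)⁻¹ * b⁻¹) : GG) := by
  rw [commutatorElement_def, inv_formula, inv_formula, mul_formula, mul_formula, mul_formula]
  have hv : u * v * u⁻¹ = v := by rw [mul_comm u v]; group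
  have h1 : u * v * u⁻¹ * v⁻¹ = 1 := by rw [hv, mul_inv_cancel]
  have hai : ∀ (w : Multiplicative Z2) (c : Multiplicative C1Z2), (act w)⁻¹ c = act w⁻¹ c := by
    intro w c; rw [map_inv]
  simp only [map_inv, hai, act_act, hv, h1, map_one, MulAut.one_apply, MulAut.apply_inv_self,
    mul_inv_cancel, map_one, mul_one, mul_assoc]



lemma conj_inl (g : GG) (c : C1Z2) :
    g * inl (ofAdd c) * g⁻¹ = inl (ofAdd (shiftZ (toAdd g.right) c)) := by
  have h : ∀ (n : Multiplicative C1Z2), g * inl n * g⁻¹ = inl (act g.right n) := by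
    intro n
    ext
    · simp [mul_left, inv_left, map_mul, mul_comm]
    · simp [mul_right, inv_right]
  rw [h, ← ofAdd_toAdd g.right, act_apply]
  simp

lemma comm_left_one (a b : GG) (ha : a.right = 1) (hb : b.right = 1) : a * b = b * a := by
  refine SemidirectProduct.ext ?_ ?_
  · simp only [mul_left, ha, hb, map_one, MulAut.one_apply]
    exact mul_comm _ _
  · simp only [mul_right, ha, hb]

lemma gz_zpow (t : ℤ) : gz ^ t = inl (ofAdd (t • plaq2 0)) := by
  rw [gz, ← map_zpow, ← ofAdd_zsmul]

lemma comm_gx_gy (k : ℤ) : ⁅gx k, gy k⁆ = gz ^ k := by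
  rw [gx, gy, comm_formula, gz_zpow, act_apply, act_apply]
  congr 1
  simp only [← ofAdd_neg, ← ofAdd_add]
  congr 1
  rw [map_zsmul, map_zsmul, shiftZ_single, shiftZ_single, plaq2]
  simp only [add_zero, zero_add, smul_add, smul_sub]
  abel

noncomputable def fgen (k : ℤ) : Fin 3 → GG := ![gx k, gy k, gz]

lemma fgen0 (k : ℤ) : fgen k 0 = gx k := rfl
lemma fgen1 (k : ℤ) : fgen k 1 = gy k := rfl
lemma fgen2 (k : ℤ) : fgen k 2 = gz := rfl

lemma lift_wmn (k : ℤ) (m n : ℤ) :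
    FreeGroup.lift (fgen k) (wmn m n) = gx k ^ m * gy k ^ n := by
  simp [wmn, xg, yg, map_mul, map_zpow, fgen0, fgen1]

lemma lift_conj_right (k : ℤ) (m n : ℤ) :
    (FreeGroup.lift (fgen k) (wmn m n * zg * (wmn m n)⁻¹)).right = 1 := by
  simp only [map_mul, map_inv, mul_right, inv_right]
  have hz : (FreeGroup.lift (fgen k) zg).right = 1 := by
    have : FreeGroup.lift (fgen k) zg = gz := FreeGroup.lift_apply_of
    rw [this, right_gz]
  rw [hz]
  group

lemma lift_rels (k : ℤ) : ∀ r ∈ metRels k, FreeGroup.lift (fgen k) r = 1 := by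
  intro r hr
  rcases hr with h | ⟨m, n, m', n', h⟩
  · subst h
    have hx : FreeGroup.lift (fgen k) xg = gx k := FreeGroup.lift_apply_of
    have hy : FreeGroup.lift (fgen k) yg = gy k := FreeGroup.lift_apply_of
    have hz : FreeGroup.lift (fgen k) zg = gz := FreeGroup.lift_apply_of
    rw [map_mul, map_commutatorElement, hx, hy, map_zpow, hz, comm_gx_gy]
    group
  · subst h
    rw [map_commutatorElement, commutatorElement_eq_one_iff_mul_comm]
    exact comm_left_one _ _ (lift_conj_right k m n) (lift_conj_right k m' n')

noncomputable def phi (k : ℤ) : Met2 k →* GG := PresentedGroup.toGroup (lift_rels k)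

lemma phi_X (k : ℤ) : phi k (X k) = gx k := PresentedGroup.toGroup.of _
lemma phi_Y (k : ℤ) : phi k (Y k) = gy k := PresentedGroup.toGroup.of _
lemma phi_Z (k : ℤ) : phi k (Z k) = gz := PresentedGroup.toGroup.of _

noncomputable def pih (k : ℤ) : Met2 k →* Multiplicative Z2 := rightHom.comp (phi k)

end MetDN
namespace MetDN
open Subgroup

variable {k : ℤ}

noncomputable def cw (k : ℤ) (m : ℤ × ℤ) : Met2 k :=
  (X k ^ m.1 * Y k ^ m.2) * Z k * (X k ^ m.1 * Y k ^ m.2)⁻¹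

noncomputable def Csub (k : ℤ) : Subgroup (Met2 k) := closure (Set.range (cw k))

lemma rel_one {r : FreeGroup (Fin 3)} (hr : r ∈ metRels k) :
    PresentedGroup.mk (metRels k) r = 1 :=
  (QuotientGroup.eq_one_iff _).mpr (Subgroup.subset_normalClosure hr)

lemma mk_conj (m n : ℤ) :
    PresentedGroup.mk (metRels k) (wmn m n * zg * (wmn m n)⁻¹) = cw k (m, n) := by
  have hw : PresentedGroup.mk (metRels k) (wmn m n) = X k ^ m * Y k ^ n := by
    simp only [wmn, map_mul, map_zpow]; rfl
  simp only [map_mul, map_inv, hw, cw]; rfl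

lemma cw_comm (a b : ℤ × ℤ) : cw k a * cw k b = cw k b * cw k a := by
  have h := rel_one (k := k) (Or.inr ⟨a.1, a.2, b.1, b.2, rfl⟩)
  rw [map_commutatorElement, mk_conj, mk_conj, commutatorElement_eq_one_iff_mul_comm] at h
  exact h

lemma comm_XY : ⁅X k, Y k⁆ = Z k ^ k := by
  have h := rel_one (k := k) (Or.inl rfl)
  rw [map_mul, map_commutatorElement, map_zpow] at h
  have hx : PresentedGroup.mk (metRels k) xg = X k := rfl
  have hy : PresentedGroup.mk (metRels k) yg = Y k := rfl
  have hz : PresentedGroup.mk (metRels k) zg = Z k := rfl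
  rw [hx, hy, hz] at h
  have := mul_eq_one_iff_eq_inv.mp h
  rw [this, zpow_neg, inv_inv]

lemma cw_zero : cw k (0, 0) = Z k := by simp [cw]

lemma YX_eq : Y k * X k = Z k ^ (-k) * (X k * Y k) := by
  have h := comm_XY (k := k)
  rw [commutatorElement_def] at h
  rw [zpow_neg, ← h]
  group

lemma YXinv_eq : Y k * (X k)⁻¹ = (X k)⁻¹ * Z k ^ k * Y k := by
  have h := comm_XY (k := k)
  rw [commutatorElement_def] at h
  rw [← h]
  group

lemma YinvX_eq : (Y k)⁻¹ * X k = ((Y k)⁻¹ * Z k ^ k * Y k) * (X k * (Y k)⁻¹) := by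
  have h := comm_XY (k := k)
  rw [commutatorElement_def] at h
  rw [← h]
  group

lemma YinvXinv_eq : (Y k)⁻¹ * (X k)⁻¹ = ((X k)⁻¹ * (Y k)⁻¹ * Z k ^ (-k) * Y k * X k) * ((X k)⁻¹ * (Y k)⁻¹) := by
  have h := comm_XY (k := k)
  rw [commutatorElement_def] at h
  rw [zpow_neg, ← h]
  group

lemma cw_mem (m : ℤ × ℤ) : cw k m ∈ Csub k := subset_closure ⟨m, rfl⟩

lemma conj_zpow_mem (a b : ℤ) (t : ℤ) :
    (X k ^ a * Y k ^ b) * Z k ^ t * (X k ^ a * Y k ^ b)⁻¹ ∈ Csub k := by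
  have : (X k ^ a * Y k ^ b) * Z k ^ t * (X k ^ a * Y k ^ b)⁻¹ = cw k (a, b) ^ t := by
    rw [cw, conj_zpow]
  rw [this]
  exact zpow_mem (cw_mem _) t

/-- `Y * X^a = E * (X^a * Y)` with `E` in `Csub`. -/
lemma Y_mul_Xpow (a : ℤ) : ∃ E ∈ Csub k, Y k * X k ^ a = E * (X k ^ a * Y k) := by
  induction a using Int.induction_on with
  | zero => exact ⟨1, one_mem _, by group⟩
  | succ a ih =>
    obtain ⟨E, hE, h⟩ := ih
    refine ⟨E * (X k ^ (a : ℤ) * Z k ^ (-k) * (X k ^ (a : ℤ))⁻¹), ?_, ?_⟩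
    · refine mul_mem hE ?_
      have := conj_zpow_mem (k := k) a 0 (-k)
      simpa using this
    · have h2 : Y k * X k ^ ((a : ℤ) + 1) = E * X k ^ (a : ℤ) * (Y k * X k) := by
        rw [zpow_add, zpow_one, ← mul_assoc, h]; group
      rw [h2, YX_eq]; group
  | pred a ih =>
    obtain ⟨E, hE, h⟩ := ih
    refine ⟨E * (X k ^ (-(a : ℤ) - 1) * Z k ^ k * (X k ^ (-(a : ℤ) - 1))⁻¹), ?_, ?_⟩
    · refine mul_mem hE ?_
      have := conj_zpow_mem (k := k) (-(a : ℤ) - 1) 0 k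
      simpa using this
    · have h2 : Y k * X k ^ (-(a : ℤ) - 1) = E * X k ^ (-(a : ℤ)) * (Y k * (X k)⁻¹) := by
        rw [show (-(a : ℤ) - 1) = -(a : ℤ) + (-1) by ring, zpow_add, zpow_neg_one, ← mul_assoc, h]
        group
      rw [h2, YXinv_eq]; group

/-- `Y⁻¹ * X^a = F * (X^a * Y⁻¹)` with `F` in `Csub`. -/
lemma Yinv_mul_Xpow (a : ℤ) : ∃ F ∈ Csub k, (Y k)⁻¹ * X k ^ a = F * (X k ^ a * (Y k)⁻¹) := by
  induction a using Int.induction_on with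
  | zero => exact ⟨1, one_mem _, by group⟩
  | succ a ih =>
    obtain ⟨F, hF, h⟩ := ih
    refine ⟨F * (X k ^ (a : ℤ) * ((Y k)⁻¹ * Z k ^ k * Y k) * (X k ^ (a : ℤ))⁻¹), ?_, ?_⟩
    · refine mul_mem hF ?_
      have := conj_zpow_mem (k := k) a (-1) k
      have e : X k ^ (a : ℤ) * Y k ^ (-1 : ℤ) * Z k ^ k * (X k ^ (a : ℤ) * Y k ^ (-1 : ℤ))⁻¹
          = X k ^ (a : ℤ) * ((Y k)⁻¹ * Z k ^ k * Y k) * (X k ^ (a : ℤ))⁻¹ := by group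
      rwa [e] at this
    · have h2 : (Y k)⁻¹ * X k ^ ((a : ℤ) + 1) = F * X k ^ (a : ℤ) * ((Y k)⁻¹ * X k) := by
        rw [zpow_add, zpow_one, ← mul_assoc, h]; group
      rw [h2, YinvX_eq]; group
  | pred a ih =>
    obtain ⟨F, hF, h⟩ := ih
    refine ⟨F * (X k ^ (-(a : ℤ) - 1) * ((Y k)⁻¹ * Z k ^ (-k) * Y k) * (X k ^ (-(a : ℤ) - 1))⁻¹), ?_, ?_⟩
    · refine mul_mem hF ?_
      have := conj_zpow_mem (k := k) (-(a : ℤ) - 1) (-1) (-k)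
      have e : X k ^ (-(a : ℤ) - 1) * Y k ^ (-1 : ℤ) * Z k ^ (-k) * (X k ^ (-(a : ℤ) - 1) * Y k ^ (-1 : ℤ))⁻¹
          = X k ^ (-(a : ℤ) - 1) * ((Y k)⁻¹ * Z k ^ (-k) * Y k) * (X k ^ (-(a : ℤ) - 1))⁻¹ := by group
      rwa [e] at this
    · have h2 : (Y k)⁻¹ * X k ^ (-(a : ℤ) - 1) = F * X k ^ (-(a : ℤ)) * ((Y k)⁻¹ * (X k)⁻¹) := by
        rw [show (-(a : ℤ) - 1) = -(a : ℤ) + (-1) by ring, zpow_add, zpow_neg_one, ← mul_assoc, h]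
        group
      rw [h2, YinvXinv_eq]; group

end MetDN
namespace MetDN
open Subgroup

variable {k : ℤ}

lemma conj_X_cw (m : ℤ × ℤ) : X k * cw k m * (X k)⁻¹ = cw k (m.1 + 1, m.2) := by
  obtain ⟨a, b⟩ := m
  simp only [cw]
  rw [zpow_add, zpow_one]
  group

lemma conj_Xinv_cw (m : ℤ × ℤ) : (X k)⁻¹ * cw k m * X k = cw k (m.1 - 1, m.2) := by
  obtain ⟨a, b⟩ := m
  simp only [cw]
  rw [sub_eq_add_neg, zpow_add, zpow_neg_one]
  group

lemma conj_Y_cw (m : ℤ × ℤ) : Y k * cw k m * (Y k)⁻¹ ∈ Csub k := by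
  obtain ⟨a, b⟩ := m
  obtain ⟨E, hE, h⟩ := Y_mul_Xpow (k := k) a
  have key : Y k * cw k (a, b) * (Y k)⁻¹ = E * cw k (a, b + 1) * E⁻¹ := by
    have h2 : cw k (a, b + 1) = X k ^ a * Y k * (Y k ^ b * Z k * (Y k ^ b)⁻¹) * (X k ^ a * Y k)⁻¹ := by
      simp only [cw]
      rw [zpow_add, zpow_one]
      group
    rw [h2, show cw k (a, b) = X k ^ a * (Y k ^ b * Z k * (Y k ^ b)⁻¹) * (X k ^ a)⁻¹ by
      simp only [cw]; group]
    have h3 : Y k * (X k ^ a * (Y k ^ b * Z k * (Y k ^ b)⁻¹) * (X k ^ a)⁻¹) * (Y k)⁻¹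
        = (Y k * X k ^ a) * (Y k ^ b * Z k * (Y k ^ b)⁻¹) * (Y k * X k ^ a)⁻¹ := by group
    rw [h3, h]
    group
  rw [key]
  exact mul_mem (mul_mem hE (cw_mem _)) (inv_mem hE)

lemma conj_Yinv_cw (m : ℤ × ℤ) : (Y k)⁻¹ * cw k m * Y k ∈ Csub k := by
  obtain ⟨a, b⟩ := m
  obtain ⟨F, hF, h⟩ := Yinv_mul_Xpow (k := k) a
  have key : (Y k)⁻¹ * cw k (a, b) * Y k = F * cw k (a, b - 1) * F⁻¹ := by
    have h2 : cw k (a, b - 1)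
        = X k ^ a * (Y k)⁻¹ * (Y k ^ b * Z k * (Y k ^ b)⁻¹) * (X k ^ a * (Y k)⁻¹)⁻¹ := by
      simp only [cw]
      rw [sub_eq_add_neg, zpow_add, zpow_neg_one]
      group
    rw [h2, show cw k (a, b) = X k ^ a * (Y k ^ b * Z k * (Y k ^ b)⁻¹) * (X k ^ a)⁻¹ by
      simp only [cw]; group]
    have h3 : (Y k)⁻¹ * (X k ^ a * (Y k ^ b * Z k * (Y k ^ b)⁻¹) * (X k ^ a)⁻¹) * Y k
        = ((Y k)⁻¹ * X k ^ a) * (Y k ^ b * Z k * (Y k ^ b)⁻¹) * ((Y k)⁻¹ * X k ^ a)⁻¹ := by group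
    rw [h3, h]
    group
  rw [key]
  exact mul_mem (mul_mem hF (cw_mem _)) (inv_mem hF)

/-- if conj of each generator lies in Csub then conj of any element of Csub does -/
lemma conj_closure {g : Met2 k} (hg : ∀ m : ℤ × ℤ, g * cw k m * g⁻¹ ∈ Csub k) :
    ∀ n ∈ Csub k, g * n * g⁻¹ ∈ Csub k := by
  intro n hn
  refine Subgroup.closure_induction ?_ ?_ ?_ ?_ hn
  · rintro x ⟨m, rfl⟩; exact hg m
  · simpa using one_mem (Csub k)
  · intro x y _ _ hx hy
    have : g * (x * y) * g⁻¹ = (g * x * g⁻¹) * (g * y * g⁻¹) := by group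
    rw [this]; exact mul_mem hx hy
  · intro x _ hx
    have : g * x⁻¹ * g⁻¹ = (g * x * g⁻¹)⁻¹ := by group
    rw [this]; exact inv_mem hx

/-- The subgroup of elements normalizing Csub in both directions. -/
noncomputable def Ksub (k : ℤ) : Subgroup (Met2 k) where
  carrier := {g | (∀ n ∈ Csub k, g * n * g⁻¹ ∈ Csub k) ∧ (∀ n ∈ Csub k, g⁻¹ * n * g ∈ Csub k)}
  one_mem' := by constructor <;> intro n hn <;> simpa using hn
  mul_mem' := by
    rintro g h ⟨hg1, hg2⟩ ⟨hh1, hh2⟩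
    constructor <;> intro n hn
    · have : g * h * n * (g * h)⁻¹ = g * (h * n * h⁻¹) * g⁻¹ := by group
      rw [this]; exact hg1 _ (hh1 _ hn)
    · have : (g * h)⁻¹ * n * (g * h) = h⁻¹ * (g⁻¹ * n * g) * h := by group
      rw [this]; exact hh2 _ (hg2 _ hn)
  inv_mem' := by
    rintro g ⟨hg1, hg2⟩
    constructor <;> intro n hn
    · simpa using hg2 n hn
    · simpa using hg1 n hn

lemma Z_conj_cw (m : ℤ × ℤ) : Z k * cw k m * (Z k)⁻¹ = cw k m := by
  have := cw_comm (k := k) (0, 0) m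
  rw [cw_zero] at this
  rw [this]
  group

instance Csub_normal : (Csub k).Normal := by
  have hall : ∀ g : Met2 k, g ∈ Ksub k := by
    intro g
    refine PresentedGroup.generated_by _ _ ?_ g
    intro j
    fin_cases j
    · exact ⟨conj_closure (fun m => by
          show X k * cw k m * (X k)⁻¹ ∈ Csub k
          rw [conj_X_cw]; exact cw_mem _),
        conj_closure (fun m => by
          show (X k)⁻¹ * cw k m * ((X k)⁻¹)⁻¹ ∈ Csub k
          rw [inv_inv, conj_Xinv_cw]; exact cw_mem _)⟩
    · exact ⟨conj_closure (fun m => by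
          show Y k * cw k m * (Y k)⁻¹ ∈ Csub k
          exact conj_Y_cw m),
        conj_closure (fun m => by
          show (Y k)⁻¹ * cw k m * ((Y k)⁻¹)⁻¹ ∈ Csub k
          rw [inv_inv]; exact conj_Yinv_cw m)⟩
    · exact ⟨conj_closure (fun m => by
          show Z k * cw k m * (Z k)⁻¹ ∈ Csub k
          rw [Z_conj_cw]; exact cw_mem _),
        conj_closure (fun m => by
          show (Z k)⁻¹ * cw k m * ((Z k)⁻¹)⁻¹ ∈ Csub k
          have h := Z_conj_cw (k := k) m
          have h2 : (Z k)⁻¹ * cw k m * ((Z k)⁻¹)⁻¹ = cw k m := by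
            conv_lhs => rw [← h]
            group
          rw [h2]; exact cw_mem _)⟩
  constructor
  intro n hn g
  exact (hall g).1 n hn

end MetDN
namespace MetDN
open Subgroup

variable {k : ℤ}

lemma Z_mem_Csub : Z k ∈ Csub k := by rw [← cw_zero]; exact cw_mem _

lemma Nsub_eq_Csub : Nsub k = Csub k := by
  apply le_antisymm
  · exact Subgroup.normalClosure_le_normal (by
      intro x hx
      rw [Set.mem_singleton_iff] at hx
      subst hx
      exact Z_mem_Csub)
  · rw [Csub, Subgroup.closure_le]
    rintro x ⟨m, rfl⟩
    have hz : Z k ∈ Nsub k := Subgroup.subset_normalClosure rfl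
    exact Subgroup.Normal.conj_mem (Subgroup.normalClosure_normal) _ hz _

lemma csub_mul_comm : ∀ x ∈ Csub k, ∀ y ∈ Csub k, x * y = y * x := by
  letI : CommGroup (Csub k) := Subgroup.closureCommGroupOfComm (by
    rintro x ⟨m, rfl⟩ y ⟨m', rfl⟩
    exact cw_comm m m')
  intro x hx y hy
  have := mul_comm (⟨x, hx⟩ : Csub k) ⟨y, hy⟩
  exact congrArg Subtype.val this

lemma nsub_mul_comm (a b : (Nsub k)) : a * b = b * a := by
  have ha : (a : Met2 k) ∈ Csub k := Nsub_eq_Csub ▸ a.2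
  have hb : (b : Met2 k) ∈ Csub k := Nsub_eq_Csub ▸ b.2
  exact Subtype.ext (csub_mul_comm _ ha _ hb)

end MetDN
namespace MetDN
open Finsupp

/-- the 2d vector -/
noncomputable def v2 (a b : ℤ) : Z2 := ![a, b]

@[simp] lemma v2_fst (a b : ℤ) : v2 a b 0 = a := rfl
@[simp] lemma v2_snd (a b : ℤ) : v2 a b 1 = b := rfl

lemma v2_eta (m : Z2) : v2 (m 0) (m 1) = m := by
  funext i; fin_cases i <;> rfl

lemma v2_add_e1 (a b : ℤ) : v2 a b + Pi.single 0 1 = v2 (a + 1) b := by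
  funext i; fin_cases i <;> simp [v2]

lemma v2_add_e2 (a b : ℤ) : v2 a b + Pi.single 1 1 = v2 a (b + 1) := by
  funext i; fin_cases i <;> simp [v2]

lemma add_e1_coords (m : Z2) : m + Pi.single 0 1 = v2 (m 0 + 1) (m 1) := by
  rw [← v2_eta m, v2_add_e1]; simp

lemma add_e2_coords (m : Z2) : m + Pi.single 1 1 = v2 (m 0) (m 1 + 1) := by
  rw [← v2_eta m, v2_add_e2]; simp

/-- signed interval sum: `tsumI f b "=" ∑_{0 ≤ j < b} f j` (signed for negative `b`). -/
noncomputable def tsumI {M : Type*} [AddCommGroup M] (f : ℤ → M) (b : ℤ) : M :=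
  (Finset.range b.toNat).sum (fun j => f j)
    - (Finset.range (-b).toNat).sum (fun j => f (-(j + 1 : ℕ)))

lemma tsumI_zero {M : Type*} [AddCommGroup M] (f : ℤ → M) : tsumI f 0 = 0 := by
  simp [tsumI]

lemma tsumI_succ {M : Type*} [AddCommGroup M] (f : ℤ → M) (b : ℤ) :
    tsumI f (b + 1) = tsumI f b + f b := by
  rcases le_or_gt 0 b with hb | hb
  · have h1 : (b + 1).toNat = b.toNat + 1 := by omega
    rw [tsumI, tsumI, h1, Finset.sum_range_succ]
    rw [show (-b).toNat = 0 by omega, show (-(b + 1)).toNat = 0 by omega,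
      Int.toNat_of_nonneg hb]
    simp only [Finset.range_zero, Finset.sum_empty]
    abel
  · have h1 : (b + 1).toNat = 0 := by omega
    have h2 : b.toNat = 0 := by omega
    have h3 : (-b).toNat = (-(b + 1)).toNat + 1 := by omega
    rw [tsumI, tsumI, h1, h2, h3, Finset.sum_range_succ]
    simp only [Finset.range_zero, Finset.sum_empty]
    rw [show (-(((-(b + 1)).toNat : ℕ) + 1 : ℕ) : ℤ) = -(((-(b + 1)).toNat : ℤ) + 1) by
      push_cast; ring]
    rw [show -(((-(b + 1)).toNat : ℤ) + 1) = b by omega]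
    abel

lemma tsumI_pred {M : Type*} [AddCommGroup M] (f : ℤ → M) (b : ℤ) :
    tsumI f (b - 1) = tsumI f b - f (b - 1) := by
  have := tsumI_succ f (b - 1)
  rw [sub_add_cancel] at this
  rw [this]
  abel

/-- `P : C_0 → C_1`, `δ_m ↦ p(m)`. -/
noncomputable def PP : C0Z2 →+ C1Z2 :=
  Finsupp.liftAddHom fun m => zmultiplesHom C1Z2 (plaq2 m)

lemma PP_single (m : Z2) (n : ℤ) : PP (Finsupp.single m n) = n • plaq2 m := by
  simp [PP, Finsupp.liftAddHom_apply_single]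

lemma bdZ_single (p : Z2 × Fin 2) (n : ℤ) :
    bdZ (Finsupp.single p n)
      = n • (Finsupp.single (p.1 + Pi.single p.2 1) 1 - Finsupp.single p.1 1) := by
  simp [bdZ, Finsupp.liftAddHom_apply_single]

/-- column sums -/
noncomputable def SS (a b : ℤ) : C0Z2 := tsumI (fun j => Finsupp.single (v2 a j) 1) b
noncomputable def VV (a b : ℤ) : C1Z2 := tsumI (fun j => Finsupp.single (v2 a j, 1) 1) b
noncomputable def HH (a : ℤ) : C1Z2 := tsumI (fun i => Finsupp.single (v2 i 0, 0) 1) a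

lemma SS_succ (a b : ℤ) : SS a (b + 1) = SS a b + Finsupp.single (v2 a b) 1 := by
  rw [SS, SS, tsumI_succ]
lemma SS_pred (a b : ℤ) : SS a (b - 1) = SS a b - Finsupp.single (v2 a (b - 1)) 1 := by
  rw [SS, SS, tsumI_pred]
lemma VV_succ (a b : ℤ) : VV a (b + 1) = VV a b + Finsupp.single (v2 a b, 1) 1 := by
  rw [VV, VV, tsumI_succ]
lemma VV_pred (a b : ℤ) : VV a (b - 1) = VV a b - Finsupp.single (v2 a (b - 1), 1) 1 := by
  rw [VV, VV, tsumI_pred]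
lemma HH_succ (a : ℤ) : HH (a + 1) = HH a + Finsupp.single (v2 a 0, 0) 1 := by
  rw [HH, HH, tsumI_succ]

noncomputable def AAgen : Z2 × Fin 2 → C0Z2 := fun p =>
  if p.2 = 0 then -(SS (p.1 0) (p.1 1)) else 0

lemma AAgen_h (m : Z2) : AAgen (m, 0) = -(SS (m 0) (m 1)) := rfl
lemma AAgen_v (m : Z2) : AAgen (m, 1) = 0 := rfl

/-- The retraction `A : C_1 → C_0`. -/
noncomputable def AA : C1Z2 →+ C0Z2 :=
  Finsupp.liftAddHom fun p => zmultiplesHom C0Z2 (AAgen p)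

lemma AA_single (p : Z2 × Fin 2) (n : ℤ) :
    AA (Finsupp.single p n) = n • AAgen p := by
  simp [AA, Finsupp.liftAddHom_apply_single]

/-- The homotopy `B : C_0 → C_1` (staircase path from the origin). -/
noncomputable def BB : C0Z2 →+ C1Z2 :=
  Finsupp.liftAddHom fun m => zmultiplesHom C1Z2 (HH (m 0) + VV (m 0) (m 1))

lemma BB_single (m : Z2) (n : ℤ) :
    BB (Finsupp.single m n) = n • (HH (m 0) + VV (m 0) (m 1)) := by
  simp [BB, Finsupp.liftAddHom_apply_single]

lemma AA_plaq (m : Z2) : AA (plaq2 m) = Finsupp.single m 1 := by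
  rw [plaq2]
  simp only [map_add, map_sub, AA_single, one_smul, add_e1_coords, add_e2_coords,
    AAgen_h, AAgen_v, v2_fst, v2_snd]
  rw [SS_succ, v2_eta]
  abel

lemma PP_SS (a b : ℤ) :
    PP (SS a b) = Finsupp.single (v2 a 0, 0) 1 - Finsupp.single (v2 a b, 0) 1
      + VV (a + 1) b - VV a b := by
  induction b using Int.induction_on with
  | zero => simp [SS, VV, tsumI_zero]
  | succ b ih =>
    rw [SS_succ, map_add, ih, PP_single, one_smul, plaq2, VV_succ, VV_succ,
      v2_add_e1, v2_add_e2]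
    abel
  | pred b ih =>
    rw [show (-(b : ℤ) - 1) = (-(b : ℤ)) - 1 from rfl, SS_pred, map_sub, ih,
      PP_single, one_smul, plaq2, VV_pred, VV_pred, v2_add_e1, v2_add_e2]
    abel

lemma homo_h (m : Z2) (n : ℤ) :
    Finsupp.single (m, (0 : Fin 2)) n - PP (AA (Finsupp.single (m, (0 : Fin 2)) n))
      = BB (bdZ (Finsupp.single (m, (0 : Fin 2)) n)) := by
  rw [AA_single, bdZ_single]
  rw [show ((m, (0 : Fin 2)) : Z2 × Fin 2).1 = m from rfl,
    show ((m, (0 : Fin 2)) : Z2 × Fin 2).2 = 0 from rfl]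
  rw [AAgen_h, map_zsmul, map_zsmul, map_sub, BB_single, BB_single, map_neg, PP_SS]
  simp only [add_e1_coords, v2_fst, v2_snd, one_smul]
  rw [HH_succ, v2_eta]
  rw [show (Finsupp.single ((m, (0 : Fin 2))) n : C1Z2) = n • Finsupp.single (m, (0 : Fin 2)) 1 by
    rw [Finsupp.smul_single, smul_eq_mul, mul_one]]
  module

lemma homo_v (m : Z2) (n : ℤ) :
    Finsupp.single (m, (1 : Fin 2)) n - PP (AA (Finsupp.single (m, (1 : Fin 2)) n))
      = BB (bdZ (Finsupp.single (m, (1 : Fin 2)) n)) := by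
  rw [AA_single, bdZ_single]
  rw [show ((m, (1 : Fin 2)) : Z2 × Fin 2).1 = m from rfl,
    show ((m, (1 : Fin 2)) : Z2 × Fin 2).2 = 1 from rfl]
  rw [AAgen_v, smul_zero, map_zero, sub_zero, map_zsmul, map_sub, BB_single, BB_single]
  simp only [add_e2_coords, v2_fst, v2_snd, one_smul]
  rw [VV_succ, v2_eta]
  rw [show (Finsupp.single ((m, (1 : Fin 2))) n : C1Z2) = n • Finsupp.single (m, (1 : Fin 2)) 1 by
    rw [Finsupp.smul_single, smul_eq_mul, mul_one]]
  module

/-- chain homotopy: `c - P (A c) = B (∂ c)`. -/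
lemma homotopy (c : C1Z2) : c - PP (AA c) = BB (bdZ c) := by
  have h : (AddMonoidHom.id C1Z2 - PP.comp AA) = BB.comp bdZ := by
    refine Finsupp.addHom_ext fun p n => ?_
    obtain ⟨m, i⟩ := p
    simp only [AddMonoidHom.sub_apply, AddMonoidHom.id_apply, AddMonoidHom.comp_apply]
    fin_cases i
    · exact homo_h m n
    · exact homo_v m n
  have := DFunLike.congr_fun h c
  simpa using this

lemma cycle_eq_PP_AA {c : C1Z2} (hc : bdZ c = 0) : PP (AA c) = c := by
  have h := homotopy c
  rw [hc, map_zero] at h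
  exact (sub_eq_zero.mp h).symm

lemma bdZ_plaq (m : Z2) : bdZ (plaq2 m) = 0 := by
  rw [plaq2]
  simp only [map_add, map_sub, bdZ_single, one_smul, add_e1_coords, add_e2_coords,
    v2_fst, v2_snd]
  abel

/-- shift on C0 -/
noncomputable def shift0 (v : Z2) : C0Z2 →+ C0Z2 :=
  Finsupp.mapDomain.addMonoidHom fun m => v + m

lemma shift0_single (v m : Z2) (t : ℤ) :
    shift0 v (Finsupp.single m t) = Finsupp.single (v + m) t := by
  simp [shift0, Finsupp.mapDomain.addMonoidHom_apply, Finsupp.mapDomain_single]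

lemma bdZ_shiftZ (v : Z2) (c : C1Z2) : bdZ (shiftZ v c) = shift0 v (bdZ c) := by
  have h : bdZ.comp (shiftZ v) = (shift0 v).comp bdZ := by
    refine Finsupp.addHom_ext fun p n => ?_
    obtain ⟨m, i⟩ := p
    simp only [AddMonoidHom.comp_apply]
    rw [shiftZ_single, bdZ_single, bdZ_single, map_zsmul]
    congr 1
    rw [map_sub, shift0_single, shift0_single]
    simp only [add_assoc]
  exact DFunLike.congr_fun h c

lemma shiftZ_plaq (v m : Z2) : shiftZ v (plaq2 m) = plaq2 (v + m) := by
  rw [plaq2, plaq2]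
  simp only [map_add, map_sub, shiftZ_single, add_assoc]

end MetDN
namespace MetDN
open Multiplicative SemidirectProduct Subgroup

variable {k : ℤ}

noncomputable instance instCommGroupCsub (k : ℤ) : CommGroup (Csub k) :=
  Subgroup.closureCommGroupOfComm (by
    rintro x ⟨m, rfl⟩ y ⟨m', rfl⟩
    exact cw_comm m m')

/-- `Θ₀ : C_0 → N`, `δ_m ↦ c(m)`. -/
noncomputable def theta (k : ℤ) : C0Z2 →+ Additive (Csub k) :=
  Finsupp.liftAddHom fun m => zmultiplesHom (Additive (Csub k))
    (Additive.ofMul (⟨cw k (m 0, m 1), cw_mem _⟩ : Csub k))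

lemma theta_single (m : Z2) (n : ℤ) :
    theta k (Finsupp.single m n)
      = n • Additive.ofMul (⟨cw k (m 0, m 1), cw_mem _⟩ : Csub k) := by
  exact Finsupp.liftAddHom_apply_single _ _ _

/-- the subgroup of the model corresponding to `N`. -/
noncomputable def KK : Subgroup GG where
  carrier := {g | g.right = 1 ∧ bdZ (Multiplicative.toAdd g.left) = 0}
  one_mem' := by
    constructor
    · rfl
    · show bdZ (toAdd (1 : Multiplicative C1Z2)) = 0
      simp
  mul_mem' := by
    rintro g h ⟨hg1, hg2⟩ ⟨hh1, hh2⟩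
    constructor
    · rw [mul_right, hg1, hh1, mul_one]
    · rw [mul_left, hg1, map_one, MulAut.one_apply, toAdd_mul, map_add, hg2, hh2, add_zero]
  inv_mem' := by
    rintro g ⟨hg1, hg2⟩
    constructor
    · rw [inv_right, hg1, inv_one]
    · rw [inv_left, hg1, inv_one, map_one, MulAut.one_apply, toAdd_inv, map_neg, hg2, neg_zero]

lemma KK_normal : (KK).Normal := by
  constructor
  rintro n ⟨hn1, hn2⟩ g
  have hn : n = inl (ofAdd (toAdd n.left)) := by
    rw [ofAdd_toAdd, ← inl_left_mul_inr_right n, hn1]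
    simp
  rw [hn, conj_inl]
  constructor
  · simp
  · show bdZ (toAdd (ofAdd (shiftZ (toAdd g.right) (toAdd n.left)))) = 0
    rw [toAdd_ofAdd, bdZ_shiftZ]
    rw [hn] at hn2
    have : bdZ (toAdd n.left) = 0 := hn2
    rw [this, map_zero]

lemma gz_mem_KK : gz ∈ KK := by
  constructor
  · exact right_gz
  · show bdZ (toAdd (gz.left)) = 0
    have : gz.left = ofAdd (plaq2 0) := rfl
    rw [this, toAdd_ofAdd, bdZ_plaq]

lemma phi_mem_KK (u : Met2 k) (hu : u ∈ Nsub k) : phi k u ∈ KK := by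
  haveI := KK_normal.comap (phi k)
  have h : Nsub k ≤ KK.comap (phi k) := by
    refine Subgroup.normalClosure_le_normal ?_
    intro x hx
    rw [Set.mem_singleton_iff] at hx
    subst hx
    show phi k (Z k) ∈ KK
    rw [phi_Z]
    exact gz_mem_KK
  exact h hu

lemma phi_right_one (u : Met2 k) (hu : u ∈ Nsub k) : (phi k u).right = 1 :=
  (phi_mem_KK u hu).1

lemma phi_left_ker (u : Met2 k) (hu : u ∈ Nsub k) : bdZ (toAdd (phi k u).left) = 0 :=
  (phi_mem_KK u hu).2

/-- forward map `N → Z_1`. -/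
noncomputable def fwd (k : ℤ) : (Nsub k) →* Multiplicative bdZ.ker where
  toFun u := ofAdd ⟨toAdd (phi k (u : Met2 k)).left, phi_left_ker _ u.2⟩
  map_one' := by
    have h1 : phi k ((1 : (Nsub k)) : Met2 k) = 1 := by
      rw [OneMemClass.coe_one, map_one]
    refine congrArg ofAdd (Subtype.ext ?_)
    show toAdd (phi k ((1 : (Nsub k)) : Met2 k)).left = 0
    rw [h1]
    rfl
  map_mul' u v := by
    refine congrArg ofAdd (Subtype.ext ?_)
    show toAdd (phi k ((u * v : (Nsub k)) : Met2 k)).left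
      = toAdd (phi k (u : Met2 k)).left + toAdd (phi k (v : Met2 k)).left
    have : ((u * v : (Nsub k)) : Met2 k) = (u : Met2 k) * (v : Met2 k) := rfl
    rw [this, map_mul, mul_left, phi_right_one _ u.2, map_one, MulAut.one_apply, toAdd_mul]

lemma right_zpow (g : GG) (a : ℤ) : (g ^ a).right = g.right ^ a :=
  map_zpow (rightHom : GG →* Multiplicative Z2) g a

lemma coords_pow (a b : ℤ) :
    (phi k (X k ^ a * Y k ^ b)).right = ofAdd (v2 a b) := by
  rw [map_mul, map_zpow, map_zpow, phi_X, phi_Y, mul_right]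
  rw [right_zpow, right_zpow]
  rw [right_gx, right_gy, ← ofAdd_zsmul, ← ofAdd_zsmul, ← ofAdd_add]
  congr 1
  funext i
  fin_cases i <;> simp [v2]

lemma phi_conj (a b : ℤ) :
    phi k ((X k ^ a * Y k ^ b) * Z k * (X k ^ a * Y k ^ b)⁻¹)
      = inl (ofAdd (plaq2 (v2 a b))) := by
  rw [map_mul, map_mul, map_inv, phi_Z]
  rw [show (gz : GG) = inl (ofAdd (plaq2 0)) from rfl]
  rw [conj_inl, coords_pow, toAdd_ofAdd, shiftZ_plaq, add_zero]

lemma fwd_cw (m : ℤ × ℤ) (h : cw k m ∈ Nsub k) :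
    fwd k ⟨cw k m, h⟩ = ofAdd ⟨plaq2 (v2 m.1 m.2), by rw [AddMonoidHom.mem_ker, bdZ_plaq]⟩ := by
  refine congrArg ofAdd (Subtype.ext ?_)
  show toAdd (phi k (cw k m)).left = plaq2 (v2 m.1 m.2)
  rw [cw, phi_conj]
  rfl

end MetDN
namespace MetDN
open Multiplicative SemidirectProduct Subgroup

variable {k : ℤ}

noncomputable def congrNC (k : ℤ) : (Csub k) ≃* (Nsub k) :=
  MulEquiv.subgroupCongr (Nsub_eq_Csub (k := k)).symm

lemma congrNC_coe (x : (Csub k)) : (congrNC k x : Met2 k) = (x : Met2 k) := rfl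

noncomputable def bwd (k : ℤ) : Multiplicative bdZ.ker →* (Nsub k) where
  toFun c := congrNC k (Additive.toMul (theta k (AA ((toAdd c : bdZ.ker) : C1Z2))))
  map_one' := by
    show congrNC k (Additive.toMul (theta k (AA (((toAdd (1 : Multiplicative bdZ.ker)) : bdZ.ker) : C1Z2)))) = 1
    have h0 : ((toAdd (1 : Multiplicative bdZ.ker) : bdZ.ker) : C1Z2) = 0 := rfl
    rw [h0, map_zero, map_zero]
    simp
  map_mul' c d := by
    have hcd : ((toAdd (c * d) : bdZ.ker) : C1Z2)
        = ((toAdd c : bdZ.ker) : C1Z2) + ((toAdd d : bdZ.ker) : C1Z2) := rfl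
    show congrNC k _ = congrNC k _ * congrNC k _
    rw [← map_mul]
    congr 1
    rw [hcd, map_add, map_add]
    rfl

lemma bwd_coe (c : Multiplicative bdZ.ker) :
    (bwd k c : Met2 k)
      = ((Additive.toMul (theta k (AA ((toAdd c : bdZ.ker) : C1Z2))) : (Csub k)) : Met2 k) := rfl

lemma mem_Nsub_of_Csub {g : Met2 k} (hg : g ∈ Csub k) : g ∈ Nsub k := by
  rw [Nsub_eq_Csub]; exact hg

lemma fwd_coe (u : (Nsub k)) :
    ((toAdd (fwd k u) : bdZ.ker) : C1Z2) = toAdd (phi k (u : Met2 k)).left := rfl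

lemma bwd_fwd (u : (Nsub k)) : bwd k (fwd k u) = u := by
  obtain ⟨g, hg⟩ := u
  have hg' : g ∈ Csub k := by rw [← Nsub_eq_Csub]; exact hg
  refine Subtype.ext ?_
  show (bwd k (fwd k ⟨g, hg⟩) : Met2 k) = g
  revert hg
  refine Subgroup.closure_induction
    (p := fun g _ => ∀ hg : g ∈ Nsub k, (bwd k (fwd k ⟨g, hg⟩) : Met2 k) = g)
    ?_ ?_ ?_ ?_ hg'
  · rintro x ⟨m, rfl⟩ hg
    rw [fwd_cw, bwd_coe]
    have h1 : ((toAdd (ofAdd (⟨plaq2 (v2 m.1 m.2), by rw [AddMonoidHom.mem_ker, bdZ_plaq]⟩ : bdZ.ker)) : bdZ.ker) : C1Z2)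
        = plaq2 (v2 m.1 m.2) := rfl
    rw [h1, AA_plaq, theta_single, one_zsmul, toMul_ofMul]
    show cw k ((v2 m.1 m.2) 0, (v2 m.1 m.2) 1) = cw k m
    rw [v2_fst, v2_snd]
  · intro hg
    have h1 : (⟨1, hg⟩ : (Nsub k)) = 1 := rfl
    rw [h1, map_one, map_one, OneMemClass.coe_one]
  · intro x y hx hy ihx ihy hg
    have hxN : x ∈ Nsub k := mem_Nsub_of_Csub hx
    have hyN : y ∈ Nsub k := mem_Nsub_of_Csub hy
    have h1 : (⟨x * y, hg⟩ : (Nsub k)) = ⟨x, hxN⟩ * ⟨y, hyN⟩ := rfl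
    rw [h1, map_mul, map_mul]
    push_cast
    rw [ihx hxN, ihy hyN]
  · intro x hx ihx hg
    have hxN : x ∈ Nsub k := mem_Nsub_of_Csub hx
    have h1 : (⟨x⁻¹, hg⟩ : (Nsub k)) = (⟨x, hxN⟩)⁻¹ := rfl
    rw [h1, map_inv, map_inv]
    push_cast
    rw [ihx hxN]

lemma fwd_theta_val (d : C0Z2) :
    ((toAdd (fwd k (congrNC k (Additive.toMul (theta k d)))) : bdZ.ker) : C1Z2) = PP d := by
  have hadd : ∀ d e : C0Z2,
      ((toAdd (fwd k (congrNC k (Additive.toMul (theta k (d + e))))) : bdZ.ker) : C1Z2)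
        = ((toAdd (fwd k (congrNC k (Additive.toMul (theta k d)))) : bdZ.ker) : C1Z2)
          + ((toAdd (fwd k (congrNC k (Additive.toMul (theta k e)))) : bdZ.ker) : C1Z2) := by
    intro d e
    rw [map_add, toMul_add, map_mul, map_mul, toAdd_mul]
    rfl
  induction d using Finsupp.induction with
  | zero =>
    have h : theta k (0 : C0Z2) = 0 := map_zero _
    rw [h]
    have h2 : congrNC k (Additive.toMul (0 : Additive (Csub k))) = 1 := map_one _
    rw [h2, map_one]
    have h3 : PP (0 : C0Z2) = 0 := map_zero _
    rw [h3]
    rfl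
  | single_add m n f hm hn ih =>
    rw [hadd, ih, map_add]
    congr 1
    rw [theta_single]
    have h1 : Additive.toMul (n • Additive.ofMul (⟨cw k (m 0, m 1), cw_mem _⟩ : (Csub k)))
        = (⟨cw k (m 0, m 1), cw_mem _⟩ : (Csub k)) ^ n := by
      rw [toMul_zsmul, toMul_ofMul]
    have h2 : congrNC k (⟨cw k (m 0, m 1), cw_mem _⟩ : (Csub k))
        = ⟨cw k (m 0, m 1), mem_Nsub_of_Csub (cw_mem _)⟩ := rfl
    rw [h1, map_zpow, map_zpow, h2, fwd_cw, ← ofAdd_zsmul]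
    have hp : plaq2 (v2 (m 0) (m 1)) ∈ bdZ.ker := by rw [AddMonoidHom.mem_ker, bdZ_plaq]
    show ((n • (⟨plaq2 (v2 (m 0) (m 1)), hp⟩ : bdZ.ker) : bdZ.ker) : C1Z2)
      = PP (Finsupp.single m n)
    rw [PP_single, AddSubgroupClass.coe_zsmul]
    congr 1
    exact congrArg plaq2 (v2_eta m)

lemma fwd_bwd (c : Multiplicative bdZ.ker) : fwd k (bwd k c) = c := by
  have h := fwd_theta_val (k := k) (AA ((toAdd c : bdZ.ker) : C1Z2))
  have hker : bdZ ((toAdd c : bdZ.ker) : C1Z2) = 0 := (toAdd c).2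
  rw [cycle_eq_PP_AA hker] at h
  have : bwd k c = congrNC k (Additive.toMul (theta k (AA ((toAdd c : bdZ.ker) : C1Z2)))) := rfl
  rw [this]
  have h2 : toAdd (fwd k (congrNC k (Additive.toMul (theta k (AA ((toAdd c : bdZ.ker) : C1Z2))))))
      = toAdd c := Subtype.ext h
  calc fwd k (congrNC k (Additive.toMul (theta k (AA ((toAdd c : bdZ.ker) : C1Z2)))))
      = ofAdd (toAdd (fwd k (congrNC k (Additive.toMul (theta k (AA ((toAdd c : bdZ.ker) : C1Z2))))))) := rfl
    _ = ofAdd (toAdd c) := by rw [h2]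
    _ = c := rfl

noncomputable def psi (k : ℤ) : (Nsub k) ≃* Multiplicative bdZ.ker :=
  { toFun := fwd k
    invFun := bwd k
    left_inv := bwd_fwd
    right_inv := fwd_bwd
    map_mul' := map_mul (fwd k) }

end MetDN

/-- `N` is abelian, and there is a group isomorphism `ψ : N ≃ Z_1(ℤ²)` with
`ψ(x^m y^n z (x^m y^n)⁻¹) = p(m,n)`, equivariant for conjugation over the projection
`π : Met_k(2) → ℤ²` (`π x = e₁`, `π y = e₂`, `π z = 0`): so `N` is isomorphic to
`H_1(E²)` as a group with operators from `ℤ²`. -/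
theorem N_iso_homology (k : ℤ) :
    (∀ a b : (Nsub k), a * b = b * a) ∧
    ∃ (π : Met2 k →* Multiplicative Z2)
      (ψ : (Nsub k) ≃* Multiplicative bdZ.ker),
      π (X k) = Multiplicative.ofAdd (Pi.single 0 1) ∧
      π (Y k) = Multiplicative.ofAdd (Pi.single 1 1) ∧
      π (Z k) = 1 ∧
      (∀ (m n : ℤ) (u : (Nsub k)),
        (u : Met2 k) = (X k ^ m * Y k ^ n) * Z k * (X k ^ m * Y k ^ n)⁻¹ →
        ((Multiplicative.toAdd (ψ u) : bdZ.ker) : C1Z2) = plaq2 ![m, n]) ∧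
      (∀ (g : Met2 k) (u v : (Nsub k)),
        (v : Met2 k) = g * (u : Met2 k) * g⁻¹ →
        ((Multiplicative.toAdd (ψ v) : bdZ.ker) : C1Z2)
          = shiftZ (Multiplicative.toAdd (π g))
              ((Multiplicative.toAdd (ψ u) : bdZ.ker) : C1Z2)) := by
  refine ⟨MetDN.nsub_mul_comm, MetDN.pih k, MetDN.psi k, ?_, ?_, ?_, ?_, ?_⟩
  · show SemidirectProduct.rightHom (MetDN.phi k (X k)) = _
    rw [MetDN.phi_X]
    exact MetDN.right_gx k
  · show SemidirectProduct.rightHom (MetDN.phi k (Y k)) = _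
    rw [MetDN.phi_Y]
    exact MetDN.right_gy k
  · show SemidirectProduct.rightHom (MetDN.phi k (Z k)) = _
    rw [MetDN.phi_Z]
    exact MetDN.right_gz
  · intro m n u hu
    show Multiplicative.toAdd (MetDN.phi k (u : Met2 k)).left = plaq2 ![m, n]
    rw [hu, MetDN.phi_conj]
    rfl
  · intro g u v hv
    show Multiplicative.toAdd (MetDN.phi k (v : Met2 k)).left
      = shiftZ (Multiplicative.toAdd (SemidirectProduct.rightHom (MetDN.phi k g)))
          (Multiplicative.toAdd (MetDN.phi k (u : Met2 k)).left)
    have hu1 : (MetDN.phi k (u : Met2 k)).right = 1 := MetDN.phi_right_one _ u.2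
    have hrep : MetDN.phi k (u : Met2 k)
        = SemidirectProduct.inl ((MetDN.phi k (u : Met2 k)).left) := by
      conv_lhs => rw [← SemidirectProduct.inl_left_mul_inr_right (MetDN.phi k (u : Met2 k))]
      rw [hu1]
      simp
    rw [hv, map_mul, map_mul, map_inv, hrep,
      ← ofAdd_toAdd ((MetDN.phi k (u : Met2 k)).left), MetDN.conj_inl]
    rfl
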